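/- Let G be a finite group and P a G-poset with an initial object x₀. The restriction functor along π, sending a right G-set M to Res_π M = M ∘ π^op, is an equivalence of categories from G-Set to the category of sheaves of sets on (P⋊G, J_at); a quasi-inverse is given by F ↦ F(x₀), where F(x₀) is a right G-set via the automorphisms (g, id_{x₀}) of x₀ in P⋊G. -/

import Mathlib

open CategoryTheory

/-! ## Basic site-theoretic notions -/

/-- The Ore condition: any cospan can be completed to a commutative square. -/
def OreCondition (C : Type*) [Category C] : Prop :=
  ∀ ⦃x y z : C⦄ (f : y ⟶ x) (g : z ⟶ x),
    ∃ (w : C) (p : w ⟶ y) (q : w ⟶ z), p ≫ f = q ≫ g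

/-- A Grothendieck topology is the atomic topology iff its covering sieves are
exactly the nonempty sieves. -/
def IsAtomicTopology {C : Type*} [Category C] (J : GrothendieckTopology C) : Prop :=
  ∀ (x : C) (S : Sieve x), S ∈ J x ↔ ∃ (y : C) (f : y ⟶ x), S f

/-- The presieve on `c` consisting of all morphisms with domain `c₀`. -/
def domPresieve {C : Type*} [Category C] (c₀ : C) (c : C) : Presieve c :=
  fun Y => {_f | Y = c₀}

/-! ## Right `G`-sets and the orbit category -/

/-- The category of right `G`-sets, realized as presheaves of sets on the
one-object category of `G`. -/
abbrev GSet (G : Type) [Group G] := (SingleObj G)ᵒᵖ ⥤ Type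

variable {G : Type} [Group G]

/-- The right coset space `H\G` as a right `G`-set (`G` acting by right
multiplication). -/
def cosetGSet (H : Subgroup G) : GSet G where
  obj _ := Quotient (QuotientGroup.rightRel H)
  map f := ↾(Quotient.map' (fun x => x * f.unop)
    (fun a b hab => by
      rw [QuotientGroup.rightRel_apply] at hab ⊢
      rwa [mul_inv_rev, ← mul_assoc, mul_inv_cancel_right]))
  map_id _ := by
    refine ConcreteCategory.hom_ext _ _ fun q => ?_
    induction q using Quotient.inductionOn' with
    | h a => exact congrArg (Quotient.mk _) (mul_one a)
  map_comp f g := by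
    refine ConcreteCategory.hom_ext _ _ fun q => ?_
    induction q using Quotient.inductionOn' with
    | h a => exact congrArg (Quotient.mk _) (mul_assoc a f.unop g.unop).symm

/-- The orbit category `O(G)`: the full subcategory of right `G`-sets on the
coset spaces `H\G`, indexed by the subgroups of `G`. -/
abbrev OrbitCat (G : Type) [Group G] := InducedCategory (GSet G) (cosetGSet (G := G))

/-- For `a ∈ G`, the `G`-map `c_a : 1\G → 1\G`, `k ↦ a * k`. -/
def botAuto (a : G) : cosetGSet (⊥ : Subgroup G) ⟶ cosetGSet (⊥ : Subgroup G) where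
  app _ := ↾(Quotient.map' (fun k => a * k)
    (fun x y hxy => by
      rw [QuotientGroup.rightRel_apply] at hxy ⊢
      simp only [Subgroup.mem_bot] at hxy ⊢
      rw [mul_inv_rev, ← mul_assoc, mul_assoc a, hxy]
      simp))
  naturality X Y f := by
    refine ConcreteCategory.hom_ext _ _ fun q => ?_
    induction q using Quotient.inductionOn' with
    | h k => exact congrArg (Quotient.mk _) (mul_assoc a k f.unop).symm

/-- The functor from the one-object category of `G` to the orbit category with
value `1\G`, sending `a` to `c_a`; it makes `F(1\G)` a right `G`-set for any
presheaf `F` on the orbit category. -/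
def orbitBotIota (G : Type) [Group G] : SingleObj G ⥤ OrbitCat G where
  obj _ := (⊥ : Subgroup G)
  map a := InducedCategory.homMk (botAuto a)
  map_id _ := by
    apply InducedCategory.hom_ext
    apply NatTrans.ext
    funext X
    refine ConcreteCategory.hom_ext _ _ fun q => ?_
    induction q using Quotient.inductionOn' with
    | h k => exact congrArg (Quotient.mk _) (one_mul k)
  map_comp {x y z} a b := by
    apply InducedCategory.hom_ext
    apply NatTrans.ext
    funext X
    refine ConcreteCategory.hom_ext _ _ fun q => ?_
    induction q using Quotient.inductionOn' with
    | h k => exact congrArg (Quotient.mk _) (mul_assoc b a k)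

/-! ## The transporter category of a `G`-poset -/

/-- The transporter category `P ⋊ G` of a `G`-poset `P`: objects are those of
`P`, and morphisms `x ⟶ y` are elements `g ∈ G` with `g • x ≤ y`. -/
@[ext] structure Transporter (G : Type) (P : Type) where pt : P

instance Transporter.category (G P : Type) [Group G] [PartialOrder P] [MulAction G P]
    [CovariantClass G P (· • ·) (· ≤ ·)] : Category (Transporter G P) where
  Hom x y := { g : G // g • x.pt ≤ y.pt }
  id x := ⟨1, by simp⟩
  comp {x y z} f g := ⟨g.1 * f.1, by
    rw [mul_smul]
    exact le_trans (CovariantClass.elim g.1 f.2) g.2⟩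
  id_comp f := Subtype.ext (mul_one _)
  comp_id f := Subtype.ext (one_mul _)
  assoc f g h := Subtype.ext (mul_assoc h.1 g.1 f.1).symm

variable {P : Type} [PartialOrder P] [MulAction G P]
    [CovariantClass G P (· • ·) (· ≤ ·)]

theorem smul_le_smul_act (g : G) {a b : P} (h : a ≤ b) : g • a ≤ g • b :=
  CovariantClass.elim g h

/-- An initial (i.e. bottom) element of a `G`-poset is fixed by `G`. -/
theorem smul_bot_eq {x₀ : P} (hbot : ∀ x : P, x₀ ≤ x) (g : G) : g • x₀ = x₀ :=
  le_antisymm (by simpa using smul_le_smul_act g (hbot (g⁻¹ • x₀))) (hbot _)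

/-- The endomorphism `(g, id)` of the initial object `x₀` of `P ⋊ G`. -/
def gmor {x₀ : P} (hbot : ∀ x : P, x₀ ≤ x) (g : G) :
    (⟨x₀⟩ : Transporter G P) ⟶ (⟨x₀⟩ : Transporter G P) :=
  ⟨g, le_of_eq (smul_bot_eq hbot g)⟩

theorem gmor_comp {x₀ : P} (hbot : ∀ x : P, x₀ ≤ x) (a b : G) :
    gmor (G := G) hbot b ≫ gmor hbot a = gmor hbot (a * b) := rfl

theorem gmor_one {x₀ : P} (hbot : ∀ x : P, x₀ ≤ x) :
    gmor (G := G) hbot (1 : G) = 𝟙 (⟨x₀⟩ : Transporter G P) := rfl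

/-- The projection functor `π : P ⋊ G ⥤ G`. -/
def piFunctor (G P : Type) [Group G] [PartialOrder P] [MulAction G P]
    [CovariantClass G P (· • ·) (· ≤ ·)] : Transporter G P ⥤ SingleObj G where
  obj _ := SingleObj.star G
  map f := f.1
  map_id _ := rfl
  map_comp _ _ := rfl

/-! ## Quotients of transporter categories and fixed-point presheaves -/

variable {C : Type} [SmallCategory C]

section
variable (ρ : Transporter G P ⥤ C) {x₀ : P} (hbot : ∀ x : P, x₀ ≤ x)

/-- `Hom_C(x₀, c)` as a right `G`-set, with `f · g := ρ(g, id) ≫ f`. -/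
def homGSet (c : C) : GSet G where
  obj _ := (ρ.obj ⟨x₀⟩ ⟶ c)
  map f := ↾fun φ => ρ.map (gmor hbot f.unop) ≫ φ
  map_id _ := by
    refine ConcreteCategory.hom_ext _ _ fun φ => ?_
    show ρ.map (gmor hbot (1 : G)) ≫ φ = φ
    rw [gmor_one, ρ.map_id, Category.id_comp]
  map_comp {X Y Z} f g := by
    refine ConcreteCategory.hom_ext _ _ fun φ => ?_
    show ρ.map (gmor hbot (f.unop * g.unop)) ≫ φ =
      ρ.map (gmor hbot g.unop) ≫ ρ.map (gmor hbot f.unop) ≫ φ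
    rw [← gmor_comp, ρ.map_comp, Category.assoc]

/-- Postcomposition `Hom_C(x₀, c) → Hom_C(x₀, c')` with `φ : c ⟶ c'`, as a map
of right `G`-sets. -/
def homGSetMap {c c' : C} (φ : c ⟶ c') : homGSet ρ hbot c ⟶ homGSet ρ hbot c' where
  app _ := ↾fun f => (show ρ.obj ⟨x₀⟩ ⟶ c from f) ≫ φ
  naturality X Y f := by
    refine ConcreteCategory.hom_ext _ _ fun ψ => ?_
    show (ρ.map (gmor hbot f.unop) ≫ (show ρ.obj ⟨x₀⟩ ⟶ c from ψ)) ≫ φ =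
      ρ.map (gmor hbot f.unop) ≫ ((show ρ.obj ⟨x₀⟩ ⟶ c from ψ) ≫ φ)
    exact Category.assoc _ _ _

theorem homGSetMap_id (c : C) : homGSetMap ρ hbot (𝟙 c) = 𝟙 (homGSet ρ hbot c) := by
  apply NatTrans.ext
  funext X
  refine ConcreteCategory.hom_ext _ _ fun f => ?_
  exact Category.comp_id f

theorem homGSetMap_comp {c c' c'' : C} (φ : c ⟶ c') (ψ : c' ⟶ c'') :
    homGSetMap ρ hbot (φ ≫ ψ) = homGSetMap ρ hbot φ ≫ homGSetMap ρ hbot ψ := by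
  apply NatTrans.ext
  funext X
  refine ConcreteCategory.hom_ext _ _ fun f => ?_
  exact (Category.assoc _ _ _).symm

/-- The fixed-point presheaf `F_M : x ↦ Hom_{G-Set}(Hom_C(x₀, x), M)` on `C`. -/
def fixedPointPresheaf (M : GSet G) : Cᵒᵖ ⥤ Type where
  obj c := homGSet ρ hbot c.unop ⟶ M
  map {c c'} ψ := ↾fun η => homGSetMap ρ hbot ψ.unop ≫ η
  map_id c := by
    refine ConcreteCategory.hom_ext _ _ fun η => ?_
    show homGSetMap ρ hbot (𝟙 c.unop) ≫ η = η
    rw [homGSetMap_id, Category.id_comp]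
  map_comp {c c' c''} ψ ψ' := by
    refine ConcreteCategory.hom_ext _ _ fun η => ?_
    show homGSetMap ρ hbot (ψ'.unop ≫ ψ.unop) ≫ η = _
    rw [homGSetMap_comp, Category.assoc]
    rfl

/-- The right `G`-set `𝔊(x₀)` attached to a presheaf `𝔊` on `C`: `g ∈ G`
acts as `𝔊(ρ(g, id))`. -/
def evalGSet (𝔊 : Cᵒᵖ ⥤ Type) : GSet G where
  obj _ := 𝔊.obj (Opposite.op (ρ.obj ⟨x₀⟩))
  map f := 𝔊.map (ρ.map (gmor hbot f.unop)).op
  map_id _ := by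
    show 𝔊.map (ρ.map (gmor hbot (1 : G))).op = _
    rw [gmor_one, ρ.map_id]
    exact 𝔊.map_id _
  map_comp {X Y Z} f g := by
    show 𝔊.map (ρ.map (gmor hbot (f.unop * g.unop))).op = _
    rw [← gmor_comp, ρ.map_comp, op_comp, 𝔊.map_comp]

end

/-- `ρ : P⋊G ⥤ C` is a category extension: it is bijective on objects,
surjective on morphism sets, the kernel groups `K(y)` act freely by
postcomposition on hom sets, and `ρ` exactly identifies the `K(y)`-orbits of
morphisms, i.e. `K(y)\Hom(x, y) ≅ Hom_C(ρx, ρy)`. -/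
structure IsCatExtension (ρ : Transporter G P ⥤ C) : Prop where
  bij_obj : Function.Bijective ρ.obj
  surj_map : ∀ {x y : Transporter G P} (f : ρ.obj x ⟶ ρ.obj y), ∃ u : x ⟶ y, ρ.map u = f
  free : ∀ {y : Transporter G P} (α : y ⟶ y), ρ.map α = 𝟙 (ρ.obj y) →
    ∀ {x : Transporter G P} (u : x ⟶ y), u ≫ α = u → α = 𝟙 y
  fiber : ∀ {x y : Transporter G P} (u u' : x ⟶ y),
    ρ.map u = ρ.map u' ↔ ∃ α : y ⟶ y, ρ.map α = 𝟙 (ρ.obj y) ∧ u ≫ α = u'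

/-! ## The transporter category `T(G)` on subgroups -/

/-- The transporter category `T(G)`: objects are the subgroups of `G`,
morphisms `H ⟶ K` are elements `g ∈ G` with `gHg⁻¹ ≤ K`. -/
@[ext] structure TransporterCat (G : Type) [Group G] where sub : Subgroup G

instance TransporterCat.category (G : Type) [Group G] : Category (TransporterCat G) where
  Hom H K := { g : G // ∀ h ∈ H.sub, g * h * g⁻¹ ∈ K.sub }
  id H := ⟨1, fun h hh => by simpa using hh⟩
  comp {H K L} f g := ⟨g.1 * f.1, fun h hh => by
    have hmem := g.2 _ (f.2 h hh)
    have heq : g.1 * (f.1 * h * f.1⁻¹) * g.1⁻¹ = (g.1 * f.1) * h * (g.1 * f.1)⁻¹ := by group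
    rwa [heq] at hmem⟩
  id_comp f := Subtype.ext (mul_one _)
  comp_id f := Subtype.ext (one_mul _)
  assoc f g h := Subtype.ext (mul_assoc h.1 g.1 f.1).symm

/-- The conjugate subgroup `gHg⁻¹`. -/
def conjSubgroup (g : G) (H : Subgroup G) : Subgroup G :=
  H.map (MulAut.conj g).toMonoidHom

lemma conjSubgroup_inv_mem {g : G} {H : Subgroup G} {w : G}
    (hw : w ∈ conjSubgroup g H) : g⁻¹ * w * g⁻¹⁻¹ ∈ H := by
  obtain ⟨h, hh, rfl⟩ := hw
  have : g⁻¹ * ((MulAut.conj g).toMonoidHom h) * g⁻¹⁻¹ = h := by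
    simp [MulAut.conj_apply]; group
  rwa [this]

/-- The `G`-map `H\G → K\G`, `Hk ↦ Kgk`, attached to `g ∈ G` with `gHg⁻¹ ≤ K`. -/
def transToOrbit {H K : Subgroup G} (g : { g : G // ∀ h ∈ H, g * h * g⁻¹ ∈ K }) :
    cosetGSet H ⟶ cosetGSet K where
  app _ := ↾(Quotient.map' (fun k => g.1 * k)
    (fun a b hab => by
      rw [QuotientGroup.rightRel_apply] at hab ⊢
      have := g.2 _ hab
      have heq : g.1 * (b * a⁻¹) * g.1⁻¹ = (g.1 * b) * (g.1 * a)⁻¹ := by group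
      rwa [heq] at this))
  naturality X Y f := by
    refine ConcreteCategory.hom_ext _ _ fun q => ?_
    induction q using Quotient.inductionOn' with
    | h k => exact congrArg (Quotient.mk _) (mul_assoc g.1 k f.unop).symm

/-- The setoid on `{g : G // gHg⁻¹ ≤ K}` whose classes are right cosets `Kg`. -/
def transSetoid (H K : Subgroup G) : Setoid { g : G // ∀ h ∈ H, g * h * g⁻¹ ∈ K } where
  r a b := a.1 * b.1⁻¹ ∈ K
  iseqv := by
    constructor
    · intro a; simpa using K.one_mem
    · intro a b h
      simpa using K.inv_mem h
    · intro a b c h1 h2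
      have := K.mul_mem h1 h2
      simpa [mul_assoc] using this

/-! ## The coset space `H\G` as a discrete `G`-poset -/

/-- The coset space `H\G` as a discretely ordered `G`-poset, with `g` acting
by `Hk ↦ Hkg⁻¹`. -/
def CosetPoset (G : Type) [Group G] (H : Subgroup G) :=
  Quotient (QuotientGroup.rightRel H)

instance (H : Subgroup G) : PartialOrder (CosetPoset G H) where
  le x y := x = y
  le_refl _ := rfl
  le_trans _ _ _ h h' := Eq.trans h h'
  le_antisymm _ _ h _ := h

instance (H : Subgroup G) : MulAction G (CosetPoset G H) where
  smul g := Quotient.map' (fun k => k * g⁻¹)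
    (fun a b hab => by
      rw [QuotientGroup.rightRel_apply] at hab ⊢
      simpa [mul_assoc] using hab)
  one_smul q := by
    induction q using Quotient.inductionOn' with
    | h k => exact congrArg (Quotient.mk _) (by simp)
  mul_smul a b q := by
    induction q using Quotient.inductionOn' with
    | h k => exact congrArg (Quotient.mk _) (by simp [mul_assoc])

instance (H : Subgroup G) : CovariantClass G (CosetPoset G H) (· • ·) (· ≤ ·) where
  elim g x y h := le_of_eq (congrArg (g • ·) (le_antisymm h (Eq.symm h : y ≤ x)))

/-! ## Underlying `G`-set of a right `RG`-module -/

/-- The underlying right `G`-set of a right `RG`-module. -/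
noncomputable def UGSet (R : Type) [CommRing R]
    (M : ModuleCat (MonoidAlgebra R G)ᵐᵒᵖ) : GSet G where
  obj _ := M
  map f := ↾fun m => (MulOpposite.op (MonoidAlgebra.single f.unop (1 : R))) • m
  map_id _ := by
    refine ConcreteCategory.hom_ext _ _ fun m => ?_
    show (MulOpposite.op (MonoidAlgebra.single (1 : G) (1 : R))) • m = m
    rw [← MonoidAlgebra.one_def, MulOpposite.op_one, one_smul]
  map_comp {X Y Z} f g := by
    refine ConcreteCategory.hom_ext _ _ fun m => ?_
    show (MulOpposite.op (MonoidAlgebra.single (f.unop * g.unop) (1 : R))) • m =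
      (MulOpposite.op (MonoidAlgebra.single g.unop (1 : R))) •
        ((MulOpposite.op (MonoidAlgebra.single f.unop (1 : R))) • m)
    rw [smul_smul, ← MulOpposite.op_mul, MonoidAlgebra.single_mul_single, one_mul]




/-! ## Auxiliary lemmas for the main theorem -/

section MainProof

variable {G : Type} [Group G] {P : Type} [PartialOrder P] [MulAction G P]
    [CovariantClass G P (· • ·) (· ≤ ·)] {x₀ : P}

/-- The canonical morphism `(g, ?) : x₀ ⟶ y` in the transporter category. -/
def toObj (hbot : ∀ x : P, x₀ ≤ x) (g : G) (y : Transporter G P) :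
    (⟨x₀⟩ : Transporter G P) ⟶ y :=
  ⟨g, by rw [smul_bot_eq hbot]; exact hbot y.pt⟩

lemma map_one_apply (M : GSet G) {X : (SingleObj G)ᵒᵖ}
    (h : X ⟶ X) (hh : h.unop = (1 : G)) (v : M.obj X) : M.map h v = v := by
  have h1 : h = 𝟙 X := by
    have h2 : h.unop = 𝟙 X.unop := hh
    exact congrArg Quiver.Hom.op h2
  rw [h1, M.map_id]
  rfl

theorem isSheaf_res (hbot : ∀ x : P, x₀ ≤ x) (J : GrothendieckTopology (Transporter G P))
    (hJ : IsAtomicTopology J) (M : GSet G) :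
    Presieve.IsSheaf J ((piFunctor G P).op ⋙ M) := by
  intro x S hS p hp
  obtain ⟨y, f, hf⟩ := (hJ x S).mp hS
  have hall : ∀ h : (⟨x₀⟩ : Transporter G P) ⟶ x, S h := by
    intro h
    have heq : toObj hbot (f.1⁻¹ * h.1) y ≫ f = h := Subtype.ext (by
      show f.1 * (f.1⁻¹ * h.1) = h.1
      group)
    rw [← heq]
    exact S.downward_closed hf _
  rw [Presieve.compatible_iff_sieveCompatible] at hp
  have pcong : ∀ {w : Transporter G P} {f g : w ⟶ x} (h : f = g) (hf : S f),
      p f hf = p g (h ▸ hf) := by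
    intro w f g h hf
    cases h
    rfl
  refine ⟨@p (⟨x₀⟩ : Transporter G P) (toObj hbot 1 x) (hall _), ?_, ?_⟩
  · intro z u hu
    have hB : toObj hbot 1 z ≫ u = toObj hbot u.1 x := Subtype.ext (mul_one u.1)
    have hD : gmor hbot u.1 ≫ toObj hbot 1 x = toObj hbot u.1 x :=
      Subtype.ext (one_mul u.1)
    calc ((piFunctor G P).op ⋙ M).map u.op (@p (⟨x₀⟩ : Transporter G P) (toObj hbot 1 x) (hall _))
        = ((piFunctor G P).op ⋙ M).map (gmor hbot u.1).op
            (@p (⟨x₀⟩ : Transporter G P) (toObj hbot 1 x) (hall _)) := rfl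
      _ = p (gmor hbot u.1 ≫ toObj hbot 1 x)
            (S.downward_closed (hall _) _) :=
          (hp (toObj hbot 1 x) (gmor hbot u.1) (hall _)).symm
      _ = p (toObj hbot u.1 x) (hall _) := pcong hD _
      _ = p (toObj hbot 1 z ≫ u) (S.downward_closed hu _) := pcong hB.symm _
      _ = ((piFunctor G P).op ⋙ M).map (toObj hbot 1 z).op (p u hu) :=
          hp u (toObj hbot 1 z) hu
      _ = p u hu := map_one_apply M _ rfl _
  · intro m' hm'
    have h1 := hm' (toObj hbot 1 x) (hall _)
    rw [← h1]
    exact (map_one_apply M _ rfl _).symm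

/-- The restriction functor, landing in sheaves. -/
def resFunctor (hbot : ∀ x : P, x₀ ≤ x) (J : GrothendieckTopology (Transporter G P))
    (hJ : IsAtomicTopology J) : GSet G ⥤ Sheaf J Type where
  obj M := ⟨(piFunctor G P).op ⋙ M,
    (isSheaf_iff_isSheaf_of_type J _).mpr (isSheaf_res hbot J hJ M)⟩
  map φ := ⟨Functor.whiskerLeft (piFunctor G P).op φ⟩
  map_id _ := Sheaf.hom_ext rfl
  map_comp _ _ := Sheaf.hom_ext rfl

/-- The evaluation functor `F ↦ F(x₀)`. -/
def evalFunctor (hbot : ∀ x : P, x₀ ≤ x) (J : GrothendieckTopology (Transporter G P)) :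
    Sheaf J Type ⥤ GSet G where
  obj F := evalGSet (𝟭 _) hbot F.val
  map φ :=
    { app := fun _ => φ.hom.app (Opposite.op ⟨x₀⟩)
      naturality := fun _ _ f => φ.hom.naturality ((gmor hbot f.unop).op) }
  map_id _ := rfl
  map_comp _ _ := rfl

/-- Membership in the sieve generated by morphisms out of `x₀` forces the
group element to carry the domain to `x₀`. -/
lemma mem_le (hbot : ∀ x : P, x₀ ≤ x) {y z : Transporter G P} {f : z ⟶ y}
    (hf : (Sieve.generate (domPresieve (⟨x₀⟩ : Transporter G P) y)).arrows f) :
    f.1 • z.pt ≤ x₀ := by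
  obtain ⟨Z, h, g, hg, hcomp⟩ := hf
  have hZ : Z = ⟨x₀⟩ := hg
  subst hZ
  have h2 : h.1 • z.pt = x₀ := le_antisymm h.2 (hbot _)
  have h3 : f.1 = g.1 * h.1 := by rw [← hcomp]; rfl
  rw [h3, mul_smul, h2, smul_bot_eq hbot]

/-- The induced morphism `z ⟶ x₀` for `f` in the generated sieve. -/
def mor (hbot : ∀ x : P, x₀ ≤ x) {y z : Transporter G P} (f : z ⟶ y)
    (hf : (Sieve.generate (domPresieve (⟨x₀⟩ : Transporter G P) y)).arrows f) :
    z ⟶ (⟨x₀⟩ : Transporter G P) :=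
  ⟨f.1, mem_le hbot hf⟩

/-- The comparison map `F(y) ⟶ F(x₀)`, as a natural transformation. -/
def theta (hbot : ∀ x : P, x₀ ≤ x) (F : (Transporter G P)ᵒᵖ ⥤ Type) :
    F ⟶ (piFunctor G P).op ⋙ evalGSet (𝟭 _) hbot F where
  app Y := ↾fun s => F.map (toObj hbot 1 Y.unop).op s
  naturality Y Z f := by
    refine ConcreteCategory.hom_ext _ _ fun s => ?_
    show F.map (toObj hbot 1 Z.unop).op (F.map f s)
      = F.map (gmor hbot f.unop.1).op (F.map (toObj hbot 1 Y.unop).op s)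
    rw [← FunctorToTypes.map_comp_apply, ← FunctorToTypes.map_comp_apply]
    have heq : (toObj hbot 1 Z.unop ≫ f.unop) = (gmor hbot f.unop.1 ≫ toObj hbot 1 Y.unop) :=
      Subtype.ext (by show f.unop.1 * 1 = 1 * f.unop.1; rw [mul_one, one_mul])
    show F.map ((toObj hbot 1 Z.unop ≫ f.unop).op) s
      = F.map ((gmor hbot f.unop.1 ≫ toObj hbot 1 Y.unop).op) s
    rw [heq]

theorem theta_bijective (hbot : ∀ x : P, x₀ ≤ x) (J : GrothendieckTopology (Transporter G P))
    (hJ : IsAtomicTopology J) (F : (Transporter G P)ᵒᵖ ⥤ Type)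
    (hF : Presieve.IsSheaf J F) (Y : (Transporter G P)ᵒᵖ) :
    Function.Bijective ((theta hbot F).app Y) := by
  set y := Y.unop with hy
  set S := Sieve.generate (domPresieve (⟨x₀⟩ : Transporter G P) y) with hSdef
  have hmem : S.arrows (toObj hbot 1 y) :=
    ⟨⟨x₀⟩, 𝟙 _, toObj hbot 1 y, rfl, Category.id_comp _⟩
  have hJS : S ∈ J y := (hJ y S).mpr ⟨⟨x₀⟩, toObj hbot 1 y, hmem⟩
  have hsheaf := hF S hJS
  constructor
  · intro s s' h
    have h' : F.map (toObj hbot 1 y).op s = F.map (toObj hbot 1 y).op s' := h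
    have hres : ∀ ⦃z : Transporter G P⦄ (f : z ⟶ y) (_ : S.arrows f),
        F.map f.op s = F.map f.op s' := by
      intro z f hf
      obtain ⟨Z, h2, g, hg, hcomp⟩ := hf
      have hZ : Z = ⟨x₀⟩ := hg
      subst hZ
      have hgfact : g = gmor hbot g.1 ≫ toObj hbot 1 y :=
        Subtype.ext (by show g.1 = 1 * g.1; rw [one_mul])
      rw [← hcomp, hgfact]
      simp only [op_comp, FunctorToTypes.map_comp_apply, h']
    let p : Presieve.FamilyOfElements F S.arrows := fun z f _ => F.map f.op s
    have hcompat : p.Compatible := by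
      rw [Presieve.compatible_iff_sieveCompatible]
      intro z w f g hf
      show F.map (g ≫ f).op s = F.map g.op (F.map f.op s)
      rw [op_comp, FunctorToTypes.map_comp_apply]
    obtain ⟨t, _, huniq⟩ := hsheaf p hcompat
    have hs : p.IsAmalgamation s := fun z f hf => rfl
    have hs' : p.IsAmalgamation s' := fun z f hf => (hres f hf).symm
    rw [huniq s hs, huniq s' hs']
  · intro t
    let p : Presieve.FamilyOfElements F S.arrows := fun z f hf => F.map (mor hbot f hf).op t
    have hcompat : p.Compatible := by
      rw [Presieve.compatible_iff_sieveCompatible]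
      intro z w f g hf
      have heq : mor hbot (g ≫ f) (S.downward_closed hf g) = g ≫ mor hbot f hf :=
        Subtype.ext rfl
      show F.map (mor hbot (g ≫ f) (S.downward_closed hf g)).op t
        = F.map g.op (F.map (mor hbot f hf).op t)
      rw [heq, op_comp, F.map_comp]
      rfl
    obtain ⟨s, hs, -⟩ := hsheaf p hcompat
    refine ⟨s, ?_⟩
    have h1 := hs (toObj hbot 1 y) hmem
    show F.map (toObj hbot 1 y).op s = t
    rw [h1]
    show F.map (mor hbot (toObj hbot 1 y) hmem).op t = t
    have hid : mor hbot (toObj hbot 1 y) hmem = 𝟙 (⟨x₀⟩ : Transporter G P) :=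
      Subtype.ext rfl
    rw [hid, op_id, F.map_id]
    rfl

/-- The sheaf-level comparison transformation. -/
def thetaSheaf (hbot : ∀ x : P, x₀ ≤ x) (J : GrothendieckTopology (Transporter G P))
    (hJ : IsAtomicTopology J) :
    𝟭 (Sheaf J Type) ⟶ evalFunctor hbot J ⋙ resFunctor hbot J hJ where
  app F := ⟨theta hbot F.val⟩
  naturality F F' φ := by
    apply Sheaf.hom_ext
    apply NatTrans.ext
    funext Y
    refine ConcreteCategory.hom_ext _ _ fun s => ?_
    exact (ConcreteCategory.congr_hom (φ.hom.naturality ((toObj hbot 1 Y.unop).op)) s).symm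

end MainProof

/-- Restriction along `π` is an equivalence from right `G`-sets onto the sheaves
on `(P⋊G, J_at)`, with quasi-inverse `F ↦ F(x₀)`. -/
theorem restriction_along_pi_equivalence (G : Type) [Group G] [Finite G] (P : Type) [PartialOrder P]
    [MulAction G P] [CovariantClass G P (· • ·) (· ≤ ·)]
    (x₀ : P) (hbot : ∀ x : P, x₀ ≤ x)
    (J : GrothendieckTopology (Transporter G P)) (hJ : IsAtomicTopology J) :
    ∃ E : GSet G ≌ Sheaf J Type,
      (∀ M : GSet G,
        Nonempty ((sheafToPresheaf J Type).obj (E.functor.obj M) ≅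
          (piFunctor G P).op ⋙ M)) ∧
      (∀ F : Sheaf J Type,
        Nonempty (E.inverse.obj F ≅ evalGSet (𝟭 (Transporter G P)) hbot F.val)) := by
  have unitIso : 𝟭 (GSet G) ≅ resFunctor hbot J hJ ⋙ evalFunctor hbot J :=
    NatIso.ofComponents
      (fun M => NatIso.ofComponents (fun X => Iso.refl _) (fun f => rfl))
      (fun φ => by apply NatTrans.ext; funext X; rfl)
  have hcomp : ∀ F : Sheaf J Type, IsIso ((thetaSheaf hbot J hJ).app F) := by
    intro F
    have h1 : IsIso (theta hbot F.val) := by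
      haveI : ∀ Y, IsIso ((theta hbot F.val).app Y) := fun Y =>
        (isIso_iff_bijective _).mpr
          (theta_bijective hbot J hJ F.val
            ((isSheaf_iff_isSheaf_of_type J F.val).mp F.cond) Y)
      exact NatIso.isIso_of_isIso_app _
    haveI h2 : IsIso ((sheafToPresheaf J Type).map ((thetaSheaf hbot J hJ).app F)) := h1
    exact isIso_of_reflects_iso ((thetaSheaf hbot J hJ).app F) (sheafToPresheaf J Type)
  haveI : IsIso (thetaSheaf hbot J hJ) := by
    haveI := hcomp
    exact NatIso.isIso_of_isIso_app _
  have counitIso : evalFunctor hbot J ⋙ resFunctor hbot J hJ ≅ 𝟭 (Sheaf J Type) :=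
    (asIso (thetaSheaf hbot J hJ)).symm
  refine ⟨CategoryTheory.Equivalence.mk (resFunctor hbot J hJ) (evalFunctor hbot J) unitIso counitIso,
    fun M => ⟨Iso.refl _⟩, fun F => ⟨Iso.refl _⟩⟩
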